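/- Let p be an odd prime, let a ≥ 1, let b = ⌈a/3⌉, and let χ be a Dirichlet character modulo p^a. Suppose B is an integer with χ(1 + p^b) = exp(2πi B / p^{a−b}), and suppose L is an integer satisfying L·(2 − p^b) ≡ B (mod p^{a−b}). Then for every integer x, χ(1 + p^b x) = exp(2πi L (2 p^b x − p^{2b} x²) / p^a). -/

import Mathlib

lemma stmt7_binom (p : ℕ) (hp : p.Prime) (hp2 : p ≠ 2) (m : ℕ) (hm : 1 ≤ m) (w : ℤ) :
    ((p:ℤ)^(m+2)) ∣ (1 + (p:ℤ)^m * w)^p - 1 - (p:ℤ) * ((p:ℤ)^m * w) := by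
  set z : ℤ := (p:ℤ)^m * w with hz
  have hp3 : 3 ≤ p := by
    rcases hp.two_le.lt_or_eq with h | h
    · omega
    · omega
  obtain ⟨n, rfl⟩ : ∃ n, p = n + 2 := ⟨p - 2, by omega⟩
  set q : ℤ := ((n+2 : ℕ) : ℤ) with hq
  have hexp : (z + 1)^(n+2) = ∑ k ∈ Finset.range (n+3), z^k * ((n+2).choose k : ℤ) := by
    rw [add_pow]
    apply Finset.sum_congr rfl
    intro k _
    simp
  have hsplit : ∑ k ∈ Finset.range (n+3), z^k * ((n+2).choose k : ℤ)
      = (∑ i ∈ Finset.range (n+1), z^(i+2) * ((n+2).choose (i+2) : ℤ)) + (q*z + 1) := by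
    rw [Finset.sum_range_succ' (fun k => z^k * ((n+2).choose k : ℤ)) (n+2),
      Finset.sum_range_succ' (fun k => z^(k+1) * ((n+2).choose (k+1) : ℤ)) (n+1)]
    simp [hq]
    push_cast
    ring
  have hterm : ∀ i ∈ Finset.range (n+1), (q^(m+2)) ∣ z^(i+2) * ((n+2).choose (i+2) : ℤ) := by
    intro i hi
    simp only [Finset.mem_range] at hi
    by_cases hip : i + 2 = n + 2
    · have h1 : q^(m*(n+2)) ∣ z^(i+2) := by
        rw [hip, hz, mul_pow, ← pow_mul]
        exact Dvd.dvd.mul_right dvd_rfl _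
      have h2 : (q^(m+2)) ∣ q^(m*(n+2)) := pow_dvd_pow _ (by nlinarith)
      exact Dvd.dvd.mul_right (h2.trans h1) _
    · have hlt : i + 2 < n + 2 := by omega
      have hc : q ∣ ((n+2).choose (i+2) : ℤ) :=
        Int.natCast_dvd_natCast.mpr (hp.dvd_choose_self (by omega) hlt)
      have hz2 : (q^(m+1)) ∣ z^(i+2) := by
        have e1 : (q^(m+1)) ∣ z^2 := by
          calc (q^(m+1)) ∣ q^(2*m) := pow_dvd_pow _ (by omega)
          _ ∣ z^2 := by rw [hz, mul_pow, ← pow_mul, mul_comm m 2]; exact Dvd.dvd.mul_right dvd_rfl _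
        calc (q^(m+1)) ∣ z^2 := e1
        _ ∣ z^(i+2) := by rw [pow_add]; exact dvd_mul_left _ _
      have : q^(m+1) * q ∣ z^(i+2) * ((n+2).choose (i+2) : ℤ) := mul_dvd_mul hz2 hc
      rwa [← pow_succ] at this
  have hsum := Finset.dvd_sum hterm
  calc (q^(m+2)) ∣ ∑ i ∈ Finset.range (n+1), z^(i+2) * ((n+2).choose (i+2) : ℤ) := hsum
  _ = (1 + z)^(n+2) - 1 - q * z := by
      rw [add_comm 1 z, hexp, hsplit]; ring

lemma stmt7_S (p b : ℕ) (hp : p.Prime) (hp2 : p ≠ 2) (hb1 : 1 ≤ b) :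
    ∀ k : ℕ, ∃ w : ℤ, (1 + (p:ℤ)^b)^(p^k) = 1 + (p:ℤ)^(b+k) * w ∧ ¬ ((p:ℤ) ∣ w) := by
  have hpne : ¬ ((p:ℤ) ∣ 1) := by
    intro h
    have := Int.le_of_dvd one_pos h
    have := hp.two_le
    omega
  intro k
  induction k with
  | zero => exact ⟨1, by simp, by simpa using hpne⟩
  | succ k ih =>
    obtain ⟨w, heq, hw⟩ := ih
    set m := b + k with hm
    have hm1 : 1 ≤ m := by omega
    obtain ⟨t, ht⟩ := stmt7_binom p hp hp2 m hm1 w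
    refine ⟨w + (p:ℤ) * t, ?_, ?_⟩
    · have : (1 + (p:ℤ)^m * w)^p = 1 + (p:ℤ) * ((p:ℤ)^m * w) + (p:ℤ)^(m+2) * t := by
        linarith [ht]
      rw [pow_succ, pow_mul, heq, this]
      have hmb : b + (k+1) = m + 1 := by omega
      rw [hmb]
      ring
    · intro hdvd
      apply hw
      have h2 : (p:ℤ) ∣ (p:ℤ) * t := dvd_mul_right _ t
      have := dvd_sub hdvd h2
      simpa using this

lemma stmt7_lin (z : ℤ) : ∀ m : ℕ, (1+z)^m ≡ 1 + m*z [ZMOD z^2] := by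
  intro m
  induction m with
  | zero => simp
  | succ m ih =>
    have h1 : (1+z)^(m+1) = (1+z)^m * (1+z) := by ring
    rw [h1]
    calc (1+z)^m * (1+z) ≡ (1 + m*z) * (1+z) [ZMOD z^2] := ih.mul_right _
    _ ≡ 1 + (m+1)*z [ZMOD z^2] := by
        exact Int.modEq_iff_dvd.mpr ⟨-(m:ℤ), by ring⟩
    _ = 1 + ((m+1 : ℕ) : ℤ)*z := by push_cast; ring

lemma stmt7_exp_congr (p : ℕ) (hp : 0 < p) (a : ℕ) (s t : ℤ) (h : s ≡ t [ZMOD (p:ℤ)^a]) :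
    Complex.exp (2 * (Real.pi:ℂ) * Complex.I * (s:ℂ) / (p:ℂ)^a)
      = Complex.exp (2 * (Real.pi:ℂ) * Complex.I * (t:ℂ) / (p:ℂ)^a) := by
  have hpa : ((p:ℂ))^a ≠ 0 := pow_ne_zero _ (Nat.cast_ne_zero.mpr hp.ne')
  obtain ⟨k, hk⟩ := Int.ModEq.dvd h.symm
  have hs : (s:ℂ) = (t:ℂ) + (p:ℂ)^a * (k:ℂ) := by
    have : s = t + (p:ℤ)^a * k := by linarith [hk]
    exact_mod_cast congrArg (Int.cast : ℤ → ℂ) this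
  rw [hs]
  have : 2 * (Real.pi:ℂ) * Complex.I * ((t:ℂ) + (p:ℂ)^a * (k:ℂ)) / (p:ℂ)^a
      = 2 * (Real.pi:ℂ) * Complex.I * (t:ℂ) / (p:ℂ)^a + (k:ℂ) * (2 * (Real.pi:ℂ) * Complex.I) := by
    field_simp
    try ring
  rw [this, Complex.exp_add, Complex.exp_int_mul_two_pi_mul_I, mul_one]

lemma stmt7_gen (p b a : ℕ) (hp : p.Prime) (hp2 : p ≠ 2) (hb1 : 1 ≤ b) (hba : b ≤ a) (x : ℤ) :
    ∃ n : ℕ, 1 + (p:ℤ)^b * x ≡ (1 + (p:ℤ)^b)^n [ZMOD (p:ℤ)^a] := by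
  have hpp : Prime (p:ℤ) := Nat.prime_iff_prime_int.mp hp
  have hp0 : (0:ℤ) < (p:ℤ) := by exact_mod_cast hp.pos
  have R : ∀ j : ℕ, ∀ c : ℕ, a ≤ c + j → b ≤ c → ∀ x : ℤ,
      ∃ n : ℕ, 1 + (p:ℤ)^c * x ≡ (1 + (p:ℤ)^b)^n [ZMOD (p:ℤ)^a] := by
    intro j
    induction j with
    | zero =>
      intro c hc _ x
      refine ⟨0, Int.modEq_iff_dvd.mpr ?_⟩
      have h1 : (p:ℤ)^a ∣ (p:ℤ)^c * x := ((pow_dvd_pow (p:ℤ) (by omega)).mul_right x)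
      simpa using dvd_neg.mpr h1
    | succ j ih =>
      intro c hc hbc x
      by_cases hcase : a ≤ c + j
      · exact ih c hcase hbc x
      have hca : c + 1 ≤ a := by omega
      -- the basic unit E = (1+p^b)^(p^(c-b)) = 1 + p^c u, p ∤ u
      obtain ⟨u, hu, hpu⟩ := stmt7_S p b hp hp2 hb1 (c - b)
      rw [show b + (c - b) = c by omega] at hu
      -- inverse of u mod p
      obtain ⟨α, β, hαβ⟩ := (hpp.coprime_iff_not_dvd).mpr hpu
      set m0 : ℤ := x * β with hm0
      set m : ℕ := (m0 % (p:ℤ)).toNat with hm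
      have hmz : (m:ℤ) = m0 % (p:ℤ) := Int.toNat_of_nonneg (Int.emod_nonneg m0 hp0.ne')
      have hmm0 : (m:ℤ) ≡ m0 [ZMOD (p:ℤ)] := by
        rw [hmz]; exact Int.emod_emod_of_dvd m0 dvd_rfl
      have hum : u * (m:ℤ) ≡ x [ZMOD (p:ℤ)] := by
        calc u * (m:ℤ) ≡ u * m0 [ZMOD (p:ℤ)] := hmm0.mul_left u
        _ ≡ x [ZMOD (p:ℤ)] := by
            symm
            refine Int.modEq_iff_dvd.mpr ⟨-(x*α), ?_⟩
            rw [hm0]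
            linear_combination x * hαβ
      obtain ⟨t, ht⟩ := Int.ModEq.dvd hum.symm  -- (p:ℤ) ∣ u*m - x ?
      -- A = (1+p^b)^(p^(c-b)*m) ≡ 1 + p^c x mod p^(c+1)
      set A : ℤ := (1 + (p:ℤ)^b)^(p^(c-b) * m) with hA
      have hA1 : A = (1 + (p:ℤ)^c * u)^m := by rw [hA, pow_mul, hu]
      have hA2 : A ≡ 1 + (m:ℤ) * ((p:ℤ)^c * u) [ZMOD (p:ℤ)^(c+1)] := by
        refine Int.ModEq.of_dvd ?_ (by rw [hA1]; exact stmt7_lin ((p:ℤ)^c * u) m)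
        calc ((p:ℤ)^(c+1)) ∣ (p:ℤ)^(2*c) := pow_dvd_pow _ (by omega)
        _ ∣ ((p:ℤ)^c * u)^2 := by rw [mul_pow, ← pow_mul, mul_comm c 2]; exact Dvd.dvd.mul_right dvd_rfl _
      have hA3 : A ≡ 1 + (p:ℤ)^c * x [ZMOD (p:ℤ)^(c+1)] := by
        refine hA2.trans (Int.modEq_iff_dvd.mpr ⟨-t, ?_⟩)
        have : u * (m:ℤ) - x = (p:ℤ) * t := by linarith [ht]
        linear_combination (-(p:ℤ)^c) * this
      obtain ⟨r, hr⟩ := Int.ModEq.dvd hA3  -- (p:ℤ)^(c+1) ∣ (1 + p^c x) - A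
      -- inverse of A mod p^a
      have hcop1 : IsCoprime (1 + (p:ℤ)^b) ((p:ℤ)) := by
        have h := (isCoprime_one_left (x := (p:ℤ))).add_mul_left_left ((p:ℤ)^(b-1))
        rwa [show (p:ℤ) * (p:ℤ)^(b-1) = (p:ℤ)^b by
          rw [← pow_succ']; congr 1; omega] at h
      have hcopA : IsCoprime A ((p:ℤ)^a) := (hcop1.pow_left).pow_right
      obtain ⟨γ, δ, hγδ⟩ := hcopA
      set y : ℤ := r * γ with hy
      have hmain : (1 + (p:ℤ)^(c+1) * y) * A ≡ 1 + (p:ℤ)^c * x [ZMOD (p:ℤ)^a] := by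
        symm
        refine Int.modEq_iff_dvd.mpr ⟨-((p:ℤ)^(c+1) * r * δ), ?_⟩
        rw [hy]
        linear_combination -hr + (p:ℤ)^(c+1)*r*hγδ
      obtain ⟨n', hn'⟩ := ih (c+1) (by omega) (by omega) y
      refine ⟨n' + p^(c-b) * m, ?_⟩
      calc 1 + (p:ℤ)^c * x ≡ (1 + (p:ℤ)^(c+1) * y) * A [ZMOD (p:ℤ)^a] := hmain.symm
      _ ≡ (1 + (p:ℤ)^b)^n' * A [ZMOD (p:ℤ)^a] := hn'.mul_right A
      _ = (1 + (p:ℤ)^b)^(n' + p^(c-b) * m) := by rw [hA, ← pow_add]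
  exact R (a - b) b (by omega) le_rfl x

theorem stmt7 (p : ℕ) (hp : p.Prime) (hp2 : p ≠ 2) (a : ℕ) (ha : 1 ≤ a)
    (b : ℕ) (hb : (b : ℤ) = ⌈(a : ℚ) / 3⌉)
    (χ : DirichletCharacter ℂ (p ^ a)) (B L : ℤ)
    (hB : χ ((1 + (p : ℤ) ^ b : ℤ) : ZMod (p ^ a)) =
      Complex.exp (2 * (Real.pi : ℂ) * Complex.I * (B : ℂ) / (p : ℂ) ^ (a - b)))
    (hL : L * (2 - (p : ℤ) ^ b) ≡ B [ZMOD ((p : ℤ) ^ (a - b))]) :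
    ∀ x : ℤ, χ ((1 + (p : ℤ) ^ b * x : ℤ) : ZMod (p ^ a)) =
      Complex.exp (2 * (Real.pi : ℂ) * Complex.I * (L : ℂ) *
        (2 * (p : ℂ) ^ b * (x : ℂ) - (p : ℂ) ^ (2 * b) * (x : ℂ) ^ 2) / (p : ℂ) ^ a) := by
  intro x
  have hq0 : ((p:ℤ)) ≠ 0 := by exact_mod_cast hp.pos.ne'
  -- numerology on b
  have hba : b ≤ a := by
    have h1 : (b:ℤ) ≤ (a:ℤ) := by
      rw [hb]
      calc ⌈(a : ℚ) / 3⌉ ≤ ⌈(a : ℚ)⌉ := by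
            apply Int.ceil_le_ceil
            have : (0:ℚ) ≤ (a:ℚ) := by positivity
            linarith
      _ = (a:ℤ) := by exact_mod_cast Int.ceil_intCast (a:ℤ)
    exact_mod_cast h1
  have hb1 : 1 ≤ b := by
    have h1 : (0:ℤ) < (b:ℤ) := by
      rw [hb]
      apply Int.ceil_pos.mpr
      have : (1:ℚ) ≤ (a:ℚ) := by exact_mod_cast ha
      linarith
    omega
  have h3b : a ≤ 3 * b := by
    have h1 : (a:ℚ)/3 ≤ ((b:ℤ):ℚ) := by rw [hb]; exact Int.le_ceil _
    have h2 : (a:ℚ) ≤ 3 * (b:ℚ) := by push_cast at h1 ⊢; linarith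
    exact_mod_cast h2
  have hpow : (p:ℤ)^b * (p:ℤ)^(a-b) = (p:ℤ)^a := by rw [← pow_add]; congr 1; omega
  -- the key recursion
  have key : ∀ n : ℕ, ∃ s : ℤ, (1 + (p:ℤ)^b)^n = 1 + (p:ℤ)^b * s ∧
      L * (2*(p:ℤ)^b*s - (p:ℤ)^(2*b)*s^2) ≡ (n:ℤ) * (B * (p:ℤ)^b) [ZMOD (p:ℤ)^a] := by
    intro n
    induction n with
    | zero => exact ⟨0, by simp, by simp⟩
    | succ n ih =>
      obtain ⟨s, h1, h2⟩ := ih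
      refine ⟨s + 1 + (p:ℤ)^b * s, ?_, ?_⟩
      · rw [pow_succ, h1]; ring
      · have hstep : L * (2*(p:ℤ)^b*(s + 1 + (p:ℤ)^b * s) - (p:ℤ)^(2*b)*(s + 1 + (p:ℤ)^b * s)^2)
            ≡ L * (2*(p:ℤ)^b*s - (p:ℤ)^(2*b)*s^2) + (p:ℤ)^b * (L*(2 - (p:ℤ)^b)) [ZMOD (p:ℤ)^a] := by
          refine Int.modEq_iff_dvd.mpr (dvd_trans (pow_dvd_pow (p:ℤ) h3b)
            ⟨L*(2*(s+1)*s + (p:ℤ)^b*s^2), by ring⟩)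
        have hbB : (p:ℤ)^b * (L*(2 - (p:ℤ)^b)) ≡ (p:ℤ)^b * B [ZMOD (p:ℤ)^a] := by
          obtain ⟨k, hk⟩ := hL.dvd
          refine Int.modEq_iff_dvd.mpr ⟨k, ?_⟩
          linear_combination (p:ℤ)^b * hk + k * hpow
        calc L * (2*(p:ℤ)^b*(s + 1 + (p:ℤ)^b * s) - (p:ℤ)^(2*b)*(s + 1 + (p:ℤ)^b * s)^2)
            ≡ L * (2*(p:ℤ)^b*s - (p:ℤ)^(2*b)*s^2) + (p:ℤ)^b * (L*(2 - (p:ℤ)^b)) [ZMOD (p:ℤ)^a] := hstep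
          _ ≡ (n:ℤ) * (B * (p:ℤ)^b) + (p:ℤ)^b * B [ZMOD (p:ℤ)^a] := h2.add hbB
          _ = ((n:ℕ)+1 : ℤ) * (B * (p:ℤ)^b) := by ring
          _ = (((n+1 : ℕ)):ℤ) * (B * (p:ℤ)^b) := by push_cast; ring
  obtain ⟨n, hn⟩ := stmt7_gen p b a hp hp2 hb1 hba x
  obtain ⟨s, hs1, hs2⟩ := key n
  -- x ≡ s mod p^(a-b)
  have hxs : (p:ℤ)^(a-b) ∣ s - x := by
    have h1 : (p:ℤ)^a ∣ (1 + (p:ℤ)^b*s) - (1 + (p:ℤ)^b*x) := by rw [← hs1]; exact hn.dvd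
    have h2 : (p:ℤ)^b * (p:ℤ)^(a-b) ∣ (p:ℤ)^b * (s - x) := by
      rw [hpow]
      convert h1 using 1; ring
    exact (mul_dvd_mul_iff_left (pow_ne_zero b hq0)).mp h2
  have hQ : L * (2*(p:ℤ)^b*x - (p:ℤ)^(2*b)*x^2) ≡ (n:ℤ) * (B * (p:ℤ)^b) [ZMOD (p:ℤ)^a] := by
    refine Int.ModEq.trans ?_ hs2
    obtain ⟨t, ht⟩ := hxs
    refine Int.modEq_iff_dvd.mpr ⟨t*L*(2 - (p:ℤ)^b*(s+x)), ?_⟩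
    linear_combination (L*(p:ℤ)^b*(2 - (p:ℤ)^b*(s+x)))*ht + (t*L*(2 - (p:ℤ)^b*(s+x)))*hpow
  -- complex side
  have hcast : ((1 + (p:ℤ)^b*x : ℤ) : ZMod (p^a)) = (((1 + (p:ℤ)^b)^n : ℤ) : ZMod (p^a)) := by
    rw [ZMod.intCast_eq_intCast_iff]
    have : (((p:ℕ)^a : ℕ) : ℤ) = (p:ℤ)^a := by push_cast; ring
    rw [this]
    exact hn
  rw [hcast]
  have hcast2 : (((1 + (p:ℤ)^b)^n : ℤ) : ZMod (p^a)) = (((1 + (p:ℤ)^b : ℤ) : ZMod (p^a)))^n := by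
    push_cast; ring
  rw [hcast2, map_pow, hB, ← Complex.exp_nat_mul]
  have hCne : ((p:ℂ))^(a-b) ≠ 0 := pow_ne_zero _ (Nat.cast_ne_zero.mpr hp.pos.ne')
  have hCne2 : ((p:ℂ))^a ≠ 0 := pow_ne_zero _ (Nat.cast_ne_zero.mpr hp.pos.ne')
  have hpowC : ((p:ℂ))^a = ((p:ℂ))^(a-b) * ((p:ℂ))^b := by
    rw [← pow_add]; congr 1; omega
  have hC1 : (n:ℂ) * (2 * (Real.pi:ℂ) * Complex.I * (B:ℂ) / (p:ℂ)^(a-b))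
      = 2 * (Real.pi:ℂ) * Complex.I * ((((n:ℤ) * (B * (p:ℤ)^b)) : ℤ) : ℂ) / (p:ℂ)^a := by
    have hPne : ((p:ℂ))^b ≠ 0 := pow_ne_zero _ (Nat.cast_ne_zero.mpr hp.pos.ne')
    push_cast
    rw [hpowC, ← mul_div_assoc, div_eq_div_iff hCne (mul_ne_zero hCne hPne)]
    ring
  rw [hC1]
  have hC2 := stmt7_exp_congr p hp.pos a ((n:ℤ) * (B * (p:ℤ)^b))
    (L * (2*(p:ℤ)^b*x - (p:ℤ)^(2*b)*x^2)) hQ.symm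
  rw [hC2]
  congr 1
  push_cast
  ring
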